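/- Let c ∈ [1, 5/2], set β = 2(1 − c/3), and let μ > 0. Suppose the real sequence (A_j)_{j≥0} solves the rescaled steady-state system and A_j → 0 as j → ∞. Then for every integer J ≥ 1, the series Σ_{j=J}^∞ 2^{βj} A_j² converges and μ · Σ_{j=J}^∞ 2^{βj} A_j² = A_{J−1}² A_J. -/

import Mathlib

open Filter

/-- The rescaled steady-state system for the viscous dyadic model:
`A_{j-1}² - A_j A_{j+1} = μ 2^{βj} A_j` for `j ≥ 1`, and `-A_0 A_1 = μ A_0 - 1`. -/
def SteadyState (β μ : ℝ) (A : ℕ → ℝ) : Prop :=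
  (∀ j : ℕ, A j ^ 2 - A (j + 1) * A (j + 2) = μ * (2 : ℝ) ^ (β * ((j : ℝ) + 1)) * A (j + 1)) ∧
  -(A 0 * A 1) = μ * A 0 - 1

theorem stmt_1 (c β μ : ℝ) (hc : c ∈ Set.Icc (1 : ℝ) (5 / 2))
    (hβ : β = 2 * (1 - c / 3)) (hμ : 0 < μ) (A : ℕ → ℝ)
    (hA : SteadyState β μ A) (hlim : Tendsto A atTop (nhds 0)) :
    ∀ J : ℕ, 1 ≤ J →
      Summable (fun k : ℕ => (2 : ℝ) ^ (β * ((J : ℝ) + (k : ℝ))) * A (J + k) ^ 2) ∧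
      μ * ∑' k : ℕ, (2 : ℝ) ^ (β * ((J : ℝ) + (k : ℝ))) * A (J + k) ^ 2
        = A (J - 1) ^ 2 * A J := by
  intro J hJ
  obtain ⟨P, rfl⟩ : ∃ P, J = P + 1 := ⟨J - 1, (Nat.succ_pred_eq_of_pos hJ).symm⟩
  set f : ℕ → ℝ := fun k => (2 : ℝ) ^ (β * (((P + 1 : ℕ) : ℝ) + (k : ℝ))) * A (P + 1 + k) ^ 2
    with hf
  set g : ℕ → ℝ := fun n => A (P + n) ^ 2 * A (P + n + 1) with hg
  have key : ∀ k, μ * f k = g k - g (k + 1) := by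
    intro k
    have h := hA.1 (P + k)
    have hc : ((P + k : ℕ) : ℝ) + 1 = ((P + 1 : ℕ) : ℝ) + (k : ℝ) := by push_cast; ring
    rw [hc] at h
    simp only [hf, hg, show P + 1 + k = P + k + 1 from by ring,
      show P + (k + 1) = P + k + 1 from by ring,
      show P + (k + 1) + 1 = P + k + 2 from by ring, show P + k + 1 + 1 = P + k + 2 from rfl]
    linear_combination (-A (P + k + 1)) * h
  have hglim : Tendsto g atTop (nhds 0) := by
    have h1 : Tendsto (fun n => A (P + n)) atTop (nhds 0) := by
      have := hlim.comp (tendsto_add_atTop_nat P)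
      simpa [Function.comp_def, Nat.add_comm] using this
    have h2 : Tendsto (fun n => A (P + n + 1)) atTop (nhds 0) := by
      have := hlim.comp (tendsto_add_atTop_nat (P + 1))
      have e : ∀ n, n + (P + 1) = P + n + 1 := fun n => by ring
      simpa [Function.comp_def, e] using this
    have := ((h1.pow 2).mul h2)
    simpa using this
  have hpartial : Tendsto (fun n => ∑ k ∈ Finset.range n, μ * f k) atTop (nhds (g 0)) := by
    have he : ∀ n, ∑ k ∈ Finset.range n, μ * f k = g 0 - g n := by
      intro n
      rw [show (fun k => μ * f k) = fun k => g k - g (k + 1) from funext key]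
      exact Finset.sum_range_sub' g n
    simp only [he]
    simpa using (tendsto_const_nhds.sub hglim)
  have hnonneg : ∀ k, 0 ≤ μ * f k := fun k => by
    have : (0:ℝ) ≤ f k := mul_nonneg (Real.rpow_nonneg (by norm_num) _) (sq_nonneg _)
    positivity
  have hHasSum : HasSum (fun k => μ * f k) (g 0) :=
    (hasSum_iff_tendsto_nat_of_nonneg hnonneg _).mpr hpartial
  have hSummable : Summable f := (summable_mul_left_iff hμ.ne').mp hHasSum.summable
  refine ⟨hSummable, ?_⟩
  have : μ * ∑' k, f k = g 0 := by
    rw [← tsum_mul_left]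
    exact hHasSum.tsum_eq
  simpa [hg] using this
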